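/- A Riemannian manifold (M,g) admits a C² function γ: M → [0,+∞), a compact set K ⊂ M, constants A, B > 0, and a smooth function G: [0,+∞) → [0,+∞) with G(0) > 0, G' ≥ 0, ∫₀^∞ dt/√(G(t)) = +∞ and limsup_{t→+∞} t·G(√t)/G(t) < +∞, such that γ is proper, |∇γ| ≤ A√γ on M \ K, and Hess γ ≤ B·√(γ·G(√γ))·g on M \ K, if and only if (M,g) admits a C² function φ: M → ℝ and constants C, D > 0 such that φ is proper, |∇φ| ≤ C on M, and Hess φ ≤ D·g on M. -/

import Mathlib

open Filter MeasureTheory Set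
open scoped ENNReal

namespace PRS

noncomputable def qf (G : ℝ → ℝ) (s : ℝ) : ℝ := s * G (Real.sqrt s)
noncomputable def wf (G : ℝ → ℝ) (s : ℝ) : ℝ := Real.sqrt (qf G s)
noncomputable def chif (R s : ℝ) : ℝ := Real.smoothTransition (s - R)
noncomputable def rhof (G : ℝ → ℝ) (R s : ℝ) : ℝ := chif R s * (wf G s)⁻¹
noncomputable def hf (G : ℝ → ℝ) (R t : ℝ) : ℝ := ∫ s in R..t, rhof G R s
noncomputable def chidf (R t : ℝ) : ℝ := deriv Real.smoothTransition (t - R)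
noncomputable def qdf (G : ℝ → ℝ) (t : ℝ) : ℝ :=
  1 * G (Real.sqrt t) + t * (deriv G (Real.sqrt t) * (1 / (2 * Real.sqrt t)))
noncomputable def wdf (G : ℝ → ℝ) (t : ℝ) : ℝ := 1 / (2 * wf G t) * qdf G t
noncomputable def rhodf (G : ℝ → ℝ) (R t : ℝ) : ℝ :=
  chidf R t * (wf G t)⁻¹ + chif R t * (-wdf G t / wf G t ^ 2)

theorem qf_pos {G : ℝ → ℝ} (hGpos : ∀ s, 0 ≤ s → 0 < G s) {s : ℝ} (hs : 0 < s) :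
    0 < qf G s := mul_pos hs (hGpos _ (Real.sqrt_nonneg s))

theorem wf_pos {G : ℝ → ℝ} (hGpos : ∀ s, 0 ≤ s → 0 < G s) {s : ℝ} (hs : 0 < s) :
    0 < wf G s := Real.sqrt_pos.2 (qf_pos hGpos hs)

theorem wf_ge {G : ℝ → ℝ} (hGnn : ∀ s, 0 ≤ s → 0 ≤ G s) (hGmono : MonotoneOn G (Ici 0))
    {t : ℝ} (ht : 1 ≤ t) : Real.sqrt (G 0) ≤ wf G t := by
  apply Real.sqrt_le_sqrt
  have h1 : G 0 ≤ G (Real.sqrt t) :=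
    hGmono self_mem_Ici (Real.sqrt_nonneg t) (Real.sqrt_nonneg t)
  have h2 : 0 ≤ G (Real.sqrt t) := hGnn _ (Real.sqrt_nonneg t)
  calc G 0 ≤ G (Real.sqrt t) := h1
    _ = 1 * G (Real.sqrt t) := (one_mul _).symm
    _ ≤ t * G (Real.sqrt t) := by nlinarith

theorem chif_zero {R s : ℝ} (h : s ≤ R) : chif R s = 0 :=
  Real.smoothTransition.zero_of_nonpos (by simp [sub_nonpos, h])

theorem chif_one {R s : ℝ} (h : R + 1 ≤ s) : chif R s = 1 :=
  Real.smoothTransition.one_of_one_le (by linarith)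

theorem chif_nonneg (R s : ℝ) : 0 ≤ chif R s := Real.smoothTransition.nonneg _

theorem chif_le_one (R s : ℝ) : chif R s ≤ 1 := Real.smoothTransition.le_one _

theorem rhof_nonneg (G : ℝ → ℝ) (R s : ℝ) : 0 ≤ rhof G R s :=
  mul_nonneg (chif_nonneg R s) (inv_nonneg.2 (Real.sqrt_nonneg _))

theorem rhof_le_inv (G : ℝ → ℝ) (R s : ℝ) : rhof G R s ≤ (wf G s)⁻¹ := by
  calc chif R s * (wf G s)⁻¹ ≤ 1 * (wf G s)⁻¹ :=
        mul_le_mul_of_nonneg_right (chif_le_one R s) (inv_nonneg.2 (Real.sqrt_nonneg _))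
    _ = (wf G s)⁻¹ := one_mul _

theorem rhof_zero {G : ℝ → ℝ} {R s : ℝ} (h : s ≤ R) : rhof G R s = 0 := by
  simp [rhof, chif_zero h]

theorem deriv_smoothTransition_zero_le {s : ℝ} (h : s ≤ 0) :
    deriv Real.smoothTransition s = 0 := by
  have h0 : Real.smoothTransition s = 0 := Real.smoothTransition.zero_of_nonpos h
  have : IsLocalMin Real.smoothTransition s :=
    Filter.Eventually.of_forall fun y => by rw [h0]; exact Real.smoothTransition.nonneg y
  exact this.deriv_eq_zero

theorem deriv_smoothTransition_one_le {s : ℝ} (h : 1 ≤ s) :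
    deriv Real.smoothTransition s = 0 := by
  have h0 : Real.smoothTransition s = 1 := Real.smoothTransition.one_of_one_le h
  have : IsLocalMax Real.smoothTransition s :=
    Filter.Eventually.of_forall fun y => by rw [h0]; exact Real.smoothTransition.le_one y
  exact this.deriv_eq_zero

theorem chidf_zero_le {R t : ℝ} (h : t ≤ R) : chidf R t = 0 :=
  deriv_smoothTransition_zero_le (by linarith)

theorem chidf_zero_ge {R t : ℝ} (h : R + 1 ≤ t) : chidf R t = 0 :=
  deriv_smoothTransition_one_le (by linarith)

theorem chidf_bound (R : ℝ) : ∃ C₀ : ℝ, 0 ≤ C₀ ∧ ∀ t, |chidf R t| ≤ C₀ := by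
  have hcont : Continuous (deriv Real.smoothTransition) :=
    (Real.smoothTransition.contDiff (n := ⊤)).continuous_deriv (by exact_mod_cast le_top)
  obtain ⟨C₁, hC₁⟩ :=
    (isCompact_Icc (a := (0:ℝ)) (b := 1)).exists_bound_of_continuousOn hcont.continuousOn
  refine ⟨max C₁ 0, le_max_right _ _, fun t => ?_⟩
  rcases le_or_gt (t - R) 0 with h | h
  · rw [chidf, deriv_smoothTransition_zero_le h]; simp
  rcases le_or_gt 1 (t - R) with h' | h'
  · rw [chidf, deriv_smoothTransition_one_le h']; simp
  · exact le_trans (by simpa [chidf] using hC₁ (t - R) ⟨h.le, h'.le⟩) (le_max_left _ _)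


theorem continuous_rhof {G : ℝ → ℝ} (hGc : Continuous G)
    (hGpos : ∀ s, 0 ≤ s → 0 < G s) {R : ℝ} (hR : 0 < R) :
    Continuous (rhof G R) := by
  have hwcont : Continuous (wf G) :=
    Real.continuous_sqrt.comp (continuous_id.mul (hGc.comp Real.continuous_sqrt))
  have hχcont : Continuous (chif R) :=
    Real.smoothTransition.continuous.comp (continuous_id.sub continuous_const)
  rw [continuous_iff_continuousAt]
  intro s
  rcases lt_or_ge 0 s with hs | hs
  · exact hχcont.continuousAt.mul (hwcont.continuousAt.inv₀ (wf_pos hGpos hs).ne')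
  · have heq : (fun _ : ℝ => (0:ℝ)) =ᶠ[nhds s] rhof G R := by
      filter_upwards [Iio_mem_nhds (show s < R by linarith)] with y hy
      exact (rhof_zero hy.le).symm
    exact continuousAt_const.congr heq

theorem hasDerivAt_hf {G : ℝ → ℝ} (hGc : Continuous G)
    (hGpos : ∀ s, 0 ≤ s → 0 < G s) {R : ℝ} (hR : 0 < R) (t : ℝ) :
    HasDerivAt (hf G R) (rhof G R t) t :=
  ((continuous_rhof hGc hGpos hR).integral_hasStrictDerivAt R t).hasDerivAt

theorem deriv_hf {G : ℝ → ℝ} (hGc : Continuous G)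
    (hGpos : ∀ s, 0 ≤ s → 0 < G s) {R : ℝ} (hR : 0 < R) :
    deriv (hf G R) = rhof G R :=
  funext fun t => (hasDerivAt_hf hGc hGpos hR t).deriv

theorem hasDerivAt_rhof {G : ℝ → ℝ} (hGdiff : Differentiable ℝ G)
    (hGpos : ∀ s, 0 ≤ s → 0 < G s) {R : ℝ} {t : ℝ} (ht : 0 < t) :
    HasDerivAt (rhof G R) (rhodf G R t) t := by
  have hsq := Real.hasDerivAt_sqrt ht.ne'
  have hGs : HasDerivAt (fun s => G (Real.sqrt s))
      (deriv G (Real.sqrt t) * (1 / (2 * Real.sqrt t))) t :=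
    (hGdiff (Real.sqrt t)).hasDerivAt.comp t hsq
  have hq : HasDerivAt (qf G) (qdf G t) t := by
    exact (hasDerivAt_id t).mul hGs
  have hqpos : 0 < qf G t := qf_pos hGpos ht
  have hw : HasDerivAt (wf G) (wdf G t) t := by
    exact (Real.hasDerivAt_sqrt hqpos.ne').comp t hq
  have hwpos : 0 < wf G t := wf_pos hGpos ht
  have hinv : HasDerivAt (fun s => (wf G s)⁻¹) (-wdf G t / wf G t ^ 2) t :=
    hw.inv hwpos.ne'
  have hχ : HasDerivAt (chif R) (chidf R t) t := by
    have hst : Differentiable ℝ Real.smoothTransition :=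
      (Real.smoothTransition.contDiff (n := ⊤)).differentiable (by simp)
    have h := (hst (t - R)).hasDerivAt.comp t ((hasDerivAt_id t).sub_const R)
    rw [mul_one] at h; exact h
  exact hχ.mul hinv

theorem deriv_deriv_hf {G : ℝ → ℝ} (hGc : Continuous G) (hGdiff : Differentiable ℝ G)
    (hGpos : ∀ s, 0 ≤ s → 0 < G s) {R : ℝ} (hR : 0 < R) {t : ℝ} (ht : 0 < t) :
    deriv (deriv (hf G R)) t = rhodf G R t := by
  rw [deriv_hf hGc hGpos hR]
  exact (hasDerivAt_rhof hGdiff hGpos ht).deriv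

theorem qdf_nonneg {G : ℝ → ℝ} (hGnn : ∀ s, 0 ≤ s → 0 ≤ G s)
    (hG' : ∀ s, 0 ≤ s → 0 ≤ deriv G s) {t : ℝ} (ht : 0 < t) : 0 ≤ qdf G t := by
  have h0 : (0:ℝ) ≤ Real.sqrt t := Real.sqrt_nonneg t
  have h1 : 0 ≤ G (Real.sqrt t) := hGnn _ h0
  have h2 : 0 ≤ deriv G (Real.sqrt t) := hG' _ h0
  have h4 : 0 ≤ 1 / (2 * Real.sqrt t) := by positivity
  have h5 : 0 ≤ t * (deriv G (Real.sqrt t) * (1 / (2 * Real.sqrt t))) := by positivity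
  simp only [qdf]; nlinarith

theorem wdf_nonneg {G : ℝ → ℝ} (hGnn : ∀ s, 0 ≤ s → 0 ≤ G s)
    (hG' : ∀ s, 0 ≤ s → 0 ≤ deriv G s) {t : ℝ} (ht : 0 < t) : 0 ≤ wdf G t := by
  have := qdf_nonneg hGnn hG' ht
  have hw : 0 ≤ wf G t := Real.sqrt_nonneg _
  have : 0 ≤ 1 / (2 * wf G t) := by positivity
  exact mul_nonneg this (qdf_nonneg hGnn hG' ht)

theorem contDiffOn_hf {G : ℝ → ℝ} (hG : ContDiff ℝ (⊤ : ℕ∞) G)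
    (hGpos : ∀ s, 0 ≤ s → 0 < G s) {R : ℝ} (hR : 0 < R) :
    ContDiffOn ℝ 2 (hf G R) (Ioi (1/2 : ℝ)) := by
  have hGc : Continuous G := hG.continuous
  have h2 : (2 : WithTop ℕ∞) = 1 + 1 := by norm_num
  rw [h2, contDiffOn_succ_iff_deriv_of_isOpen isOpen_Ioi]
  refine ⟨fun t ht => (hasDerivAt_hf hGc hGpos hR t).differentiableAt.differentiableWithinAt,
    ?_, ?_⟩
  · intro h; exact absurd h (by norm_num)
  · rw [deriv_hf hGc hGpos hR]
    intro t ht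
    have ht' : (0:ℝ) < t := lt_trans (by norm_num) ht
    apply ContDiffAt.contDiffWithinAt
    have hq : ContDiffAt ℝ 1 (qf G) t := by
      exact contDiffAt_id.mul ((hG.contDiffAt.of_le (by exact_mod_cast le_top)).comp t
        (Real.contDiffAt_sqrt ht'.ne'))
    have hw : ContDiffAt ℝ 1 (wf G) t :=
      (Real.contDiffAt_sqrt (qf_pos hGpos ht').ne').comp t hq
    have hχ : ContDiffAt ℝ 1 (chif R) t :=
      (Real.smoothTransition.contDiff (n := 1)).contDiffAt.comp t
        (contDiffAt_id.sub contDiffAt_const)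
    exact hχ.mul (hw.inv (wf_pos hGpos ht').ne')

theorem mono_hf {G : ℝ → ℝ} (hGc : Continuous G)
    (hGpos : ∀ s, 0 ≤ s → 0 < G s) {R : ℝ} (hR : 0 < R) : Monotone (hf G R) := by
  intro a b hab
  have hcont := continuous_rhof hGc hGpos hR
  have h1 := intervalIntegral.integral_add_adjacent_intervals
    (hcont.intervalIntegrable (μ := volume) R a) (hcont.intervalIntegrable (μ := volume) a b)
  have h2 : 0 ≤ ∫ s in a..b, rhof G R s :=
    intervalIntegral.integral_nonneg hab fun u _ => rhof_nonneg G R u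
  simp only [hf]
  linarith


theorem lintegral_image_eq_lintegral_abs_deriv_mul' {s : Set ℝ} {f f' : ℝ → ℝ}
    (hs : MeasurableSet s) (hf' : ∀ x ∈ s, HasDerivWithinAt f (f' x) s x)
    (hf : InjOn f s) (g : ℝ → ℝ≥0∞) :
    ∫⁻ x in f '' s, g x = ∫⁻ x in s, ENNReal.ofReal |f' x| * g (f x) := by
  simpa only [ContinuousLinearMap.det_toSpanSingleton] using
    lintegral_image_eq_lintegral_abs_det_fderiv_mul volume hs
      (fun x hx => (hf' x hx).hasFDerivWithinAt) hf g

theorem tendsto_hf {G : ℝ → ℝ} (hGc : Continuous G) (hGnn : ∀ s, 0 ≤ s → 0 ≤ G s)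
    (hGmono : MonotoneOn G (Ici 0)) (hG0 : 0 < G 0)
    (hint : ∫⁻ t in Set.Ioi (0:ℝ), ENNReal.ofReal (1 / Real.sqrt (G t)) = ⊤)
    {R : ℝ} (hR : 2 ≤ R) : Tendsto (hf G R) atTop atTop := by
  have hGpos : ∀ s, 0 ≤ s → 0 < G s := fun s hs =>
    lt_of_lt_of_le hG0 (hGmono self_mem_Ici hs hs)
  have hRpos : (0:ℝ) < R := by linarith
  have hcont := continuous_rhof hGc hGpos hRpos
  apply tendsto_atTop_atTop_of_monotone (mono_hf hGc hGpos hRpos)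
  by_contra hb
  push_neg at hb
  obtain ⟨b, hb⟩ := hb
  set T := R ^ 2 with hTdef
  have hT1 : R + 1 ≤ T := by nlinarith
  have hTpos : (0:ℝ) < T := by nlinarith
  -- Step 1 : divergence of the tail of ∫ 1/√G
  have tail : ∫⁻ u in Ioi R, ENNReal.ofReal (1 / Real.sqrt (G u)) = ⊤ := by
    by_contra htail
    have hfin : ∫⁻ u in Ioc 0 R, ENNReal.ofReal (1 / Real.sqrt (G u)) ≠ ⊤ := by
      have hle : ∫⁻ u in Ioc 0 R, ENNReal.ofReal (1 / Real.sqrt (G u))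
          ≤ ENNReal.ofReal (1 / Real.sqrt (G 0)) * volume (Ioc (0:ℝ) R) := by
        rw [← setLIntegral_const]
        apply setLIntegral_mono' measurableSet_Ioc
        intro u hu
        apply ENNReal.ofReal_le_ofReal
        apply one_div_le_one_div_of_le (Real.sqrt_pos.2 hG0)
        exact Real.sqrt_le_sqrt (hGmono self_mem_Ici hu.1.le hu.1.le)
      exact ne_top_of_le_ne_top
        (ENNReal.mul_ne_top ENNReal.ofReal_ne_top (by simp [Real.volume_Ioc])) hle
    rw [show Ioi (0:ℝ) = Ioc 0 R ∪ Ioi R from (Ioc_union_Ioi_eq_Ioi hRpos.le).symm,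
      lintegral_union measurableSet_Ioi Ioc_disjoint_Ioi_same] at hint
    exact (ENNReal.add_ne_top.2 ⟨hfin, htail⟩) hint
  -- Step 2 : change of variables u ↦ u²
  have himg : (fun u : ℝ => u ^ 2) '' Ioi R = Ioi T := by
    ext s; constructor
    · rintro ⟨u, hu, rfl⟩
      exact pow_lt_pow_left₀ hu hRpos.le two_ne_zero
    · intro hs
      have hs' : (0:ℝ) ≤ s := by have := mem_Ioi.1 hs; nlinarith
      exact ⟨Real.sqrt s, (Real.lt_sqrt hRpos.le).2 hs, Real.sq_sqrt hs'⟩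
  have hinj : InjOn (fun u : ℝ => u ^ 2) (Ioi R) := by
    intro a ha b hb hab
    have ha' : (0:ℝ) < a := lt_trans hRpos ha
    have hb' : (0:ℝ) < b := lt_trans hRpos hb
    have hab' : a ^ 2 = b ^ 2 := hab
    nlinarith [sq_nonneg (a - b), sq_nonneg (a + b)]
  have hcov := lintegral_image_eq_lintegral_abs_deriv_mul' (f' := fun u => 2 * u ^ 1)
    measurableSet_Ioi (fun u _ => (hasDerivAt_pow 2 u).hasDerivWithinAt)
    hinj (fun s => ENNReal.ofReal ((wf G s)⁻¹))
  rw [himg] at hcov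
  have hrhs : ∫⁻ u in Ioi R,
      ENNReal.ofReal |2 * u ^ 1| * ENNReal.ofReal ((wf G (u ^ 2))⁻¹) = ⊤ := by
    have heq : ∀ u ∈ Ioi R, ENNReal.ofReal |2 * u ^ 1| * ENNReal.ofReal ((wf G (u ^ 2))⁻¹)
        = 2 * ENNReal.ofReal (1 / Real.sqrt (G u)) := by
      intro u hu
      have hu0 : (0:ℝ) < u := lt_trans hRpos hu
      have hwu : wf G (u ^ 2) = u * Real.sqrt (G u) := by
        rw [wf, qf, Real.sqrt_sq hu0.le, Real.sqrt_mul (sq_nonneg u), Real.sqrt_sq hu0.le]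
      have habs : |2 * u ^ 1| = 2 * u := by
        rw [abs_of_pos (by positivity)]; ring
      rw [hwu, habs, ← ENNReal.ofReal_mul (by positivity)]
      have hGu : (0:ℝ) < Real.sqrt (G u) := Real.sqrt_pos.2 (hGpos u hu0.le)
      have : 2 * u * (u * Real.sqrt (G u))⁻¹ = 2 * (1 / Real.sqrt (G u)) := by
        field_simp
      rw [this, ENNReal.ofReal_mul (by norm_num)]
      norm_num
    rw [setLIntegral_congr_fun measurableSet_Ioi heq,
      lintegral_const_mul' 2 _ (by norm_num), tail]
    simp
  have htop : ∫⁻ s in Ioi T, ENNReal.ofReal ((wf G s)⁻¹) = ⊤ := by rw [hcov]; exact hrhs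
  have htopρ : ∫⁻ s in Ioi T, ENNReal.ofReal (rhof G R s) = ⊤ := by
    rw [setLIntegral_congr_fun measurableSet_Ioi
      (fun s hs => ?_), htop]
    have hs1 : R + 1 ≤ s := le_trans hT1 (le_of_lt hs)
    rw [rhof, chif_one hs1, one_mul]
  -- Step 3 : bounded partial integrals
  have key : ∀ n : ℕ, ∫⁻ s in Ioc T (T + n), ENNReal.ofReal (rhof G R s)
      ≤ ENNReal.ofReal (b - hf G R T) := by
    intro n
    have hIO : IntegrableOn (rhof G R) (Ioc T (T + n)) :=
      (hcont.integrableOn_Icc).mono_set Ioc_subset_Icc_self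
    have hnn : 0 ≤ᵐ[volume.restrict (Ioc T (T + n))] rhof G R :=
      ae_of_all _ fun s => rhof_nonneg G R s
    rw [← ofReal_integral_eq_lintegral_ofReal hIO hnn]
    apply ENNReal.ofReal_le_ofReal
    have hTn : T ≤ T + (n:ℝ) := by linarith [Nat.cast_nonneg (α := ℝ) n]
    rw [← intervalIntegral.integral_of_le hTn]
    have hadj := intervalIntegral.integral_add_adjacent_intervals
      (hcont.intervalIntegrable (μ := volume) R T)
      (hcont.intervalIntegrable (μ := volume) T (T + n))
    have hbb := (hb (T + n)).le
    simp only [hf] at hbb ⊢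
    linarith
  -- Step 4 : monotone convergence
  have hFm : Measurable fun s => ENNReal.ofReal (rhof G R s) :=
    ENNReal.measurable_ofReal.comp hcont.measurable
  set F : ℝ → ℝ≥0∞ := fun s => ENNReal.ofReal (rhof G R s) with hFdef
  have hmono_ind : Monotone fun (n : ℕ) => (Ioc T (T + (n:ℝ))).indicator F := by
    intro n m hnm
    apply indicator_le_indicator_of_subset
    · exact Ioc_subset_Ioc_right (by exact_mod_cast add_le_add_right (Nat.cast_le.2 hnm) T)
    · intro s; exact zero_le
  have hind_eq : (Ioi T).indicator F = fun s => ⨆ n : ℕ, (Ioc T (T + (n:ℝ))).indicator F s := by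
    ext s
    by_cases hs : s ∈ Ioi T
    · obtain ⟨n, hn⟩ := exists_nat_ge (s - T)
      rw [indicator_of_mem hs]
      apply le_antisymm
      · exact le_iSup_of_le n (ge_of_eq (indicator_of_mem (mem_Ioc.2 ⟨mem_Ioi.1 hs, by linarith⟩) F))
      · apply iSup_le; intro m
        by_cases hm : s ∈ Ioc T (T + (m:ℝ))
        · rw [indicator_of_mem hm]
        · rw [indicator_of_notMem hm]; exact zero_le
    · rw [indicator_of_notMem hs]
      symm
      apply le_antisymm ?_ zero_le
      apply iSup_le; intro m
      rw [indicator_of_notMem (fun hm => hs (mem_of_mem_of_subset hm Ioc_subset_Ioi_self))]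
  have hsup : ∫⁻ s in Ioi T, F s ≤ ENNReal.ofReal (b - hf G R T) := by
    rw [← lintegral_indicator measurableSet_Ioi, hind_eq,
      lintegral_iSup (fun n => hFm.indicator measurableSet_Ioc) hmono_ind]
    apply iSup_le; intro n
    rw [lintegral_indicator measurableSet_Ioc]
    exact key n
  rw [htopρ] at hsup
  exact absurd (top_le_iff.1 hsup) ENNReal.ofReal_ne_top


end PRS

/-- An abstract interface for a Riemannian manifold `(M,g)`: a topological space `M`
with tangent spaces `Tan x`, the squared pointwise norm `normSq x v = |v|²` coming
from the metric `g`, the class `C2` of `C²` real-valued functions, the norm of the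
gradient `gradNorm f = |∇f|`, the pairing `gradInner f x v = ⟨∇f(x), v⟩`, the Hessian
quadratic form `hess f x v = Hess f(x)(v,v)` and the Laplace–Beltrami operator
`lap f = Δf`, together with basic laws of Riemannian geometry relating them. -/
structure RiemannianStructure (M : Type*) [TopologicalSpace M] (Tan : M → Type*)
    [∀ x, AddCommGroup (Tan x)] [∀ x, Module ℝ (Tan x)] where
  normSq : ∀ x, Tan x → ℝ
  normSq_nonneg : ∀ x v, 0 ≤ normSq x v
  normSq_eq_zero_iff : ∀ (x) (v : Tan x), normSq x v = 0 ↔ v = 0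
  C2 : (M → ℝ) → Prop
  c2_continuous : ∀ f, C2 f → Continuous f
  c2_add_const : ∀ f c, C2 f → C2 fun x => f x + c
  gradNorm : (M → ℝ) → M → ℝ
  gradNorm_nonneg : ∀ f x, 0 ≤ gradNorm f x
  gradNorm_add_const : ∀ f c x, gradNorm (fun y => f y + c) x = gradNorm f x
  gradInner : (f : M → ℝ) → (x : M) → Tan x → ℝ
  gradInner_sq_le : ∀ f x v, gradInner f x v ^ 2 ≤ gradNorm f x ^ 2 * normSq x v
  hess : (M → ℝ) → (x : M) → Tan x → ℝ
  hess_add_const : ∀ f c x v, hess (fun y => f y + c) x v = hess f x v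
  lap : (M → ℝ) → M → ℝ
  lap_add_const : ∀ f c x, lap (fun y => f y + c) x = lap f x
  c2_comp : ∀ (f : M → ℝ) (h : ℝ → ℝ) (s : Set ℝ), C2 f → IsOpen s →
    (∀ x, f x ∈ s) → ContDiffOn ℝ 2 h s → C2 (h ∘ f)
  gradNorm_comp : ∀ (f : M → ℝ) (h : ℝ → ℝ) (s : Set ℝ), C2 f → IsOpen s →
    (∀ x, f x ∈ s) → ContDiffOn ℝ 2 h s →
    ∀ x, gradNorm (h ∘ f) x = |deriv h (f x)| * gradNorm f x
  hess_comp : ∀ (f : M → ℝ) (h : ℝ → ℝ) (s : Set ℝ), C2 f → IsOpen s →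
    (∀ x, f x ∈ s) → ContDiffOn ℝ 2 h s →
    ∀ x v, hess (h ∘ f) x v =
      deriv (deriv h) (f x) * gradInner f x v ^ 2 + deriv h (f x) * hess f x v


open PRS
set_option maxHeartbeats 1000000

/-- **Proposition 1 (Hessian version).** A Riemannian manifold `(M,g)` admits a `C²`
function `γ : M → [0,∞)`, a compact `K ⊆ M`, constants `A, B > 0` and a smooth
`G : [0,∞) → [0,∞)` with `G(0) > 0`, `G' ≥ 0`, `∫₀^∞ dt/√(G t) = ∞` and
`limsup_{t→∞} t·G(√t)/G(t) < ∞` such that `γ` is proper, `|∇γ| ≤ A·√γ` on `M \\ K`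
and `Hess γ ≤ B·√(γ·G(√γ))·g` on `M \\ K`, if and only if `(M,g)` admits a proper `C²`
function `φ : M → ℝ` and constants `C, D > 0` with `|∇φ| ≤ C` and `Hess φ ≤ D·g` on `M`. -/
theorem prs_data_iff_proper_boundedGradient_boundedHessian
    {M : Type*} [TopologicalSpace M] [Nonempty M] {Tan : M → Type*}
    [∀ x, AddCommGroup (Tan x)] [∀ x, Module ℝ (Tan x)]
    (R : RiemannianStructure M Tan)
    :
    (∃ (γ : M → ℝ) (K : Set M) (A B : ℝ) (G : ℝ → ℝ),
      IsCompact K ∧ 0 < A ∧ 0 < B ∧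
      R.C2 γ ∧ (∀ x, 0 ≤ γ x) ∧
      ContDiff ℝ (⊤ : ℕ∞) G ∧ (∀ t, 0 ≤ t → 0 ≤ G t) ∧ 0 < G 0 ∧
      (∀ t, 0 ≤ t → 0 ≤ deriv G t) ∧
      (∫⁻ t in Set.Ioi (0:ℝ), ENNReal.ofReal (1 / Real.sqrt (G t)) = ⊤) ∧
      (Filter.limsup (fun t : ℝ => ((t * G (Real.sqrt t) / G t : ℝ) : EReal))
        Filter.atTop < ⊤) ∧
      Tendsto γ (cocompact M) atTop ∧
      (∀ x ∉ K, R.gradNorm γ x ≤ A * Real.sqrt (γ x)) ∧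
      (∀ x ∉ K, ∀ v,
        R.hess γ x v ≤ B * Real.sqrt (γ x * G (Real.sqrt (γ x))) * R.normSq x v))
    ↔
    (∃ (φ : M → ℝ) (C D : ℝ), 0 < C ∧ 0 < D ∧
      R.C2 φ ∧ Tendsto φ (cocompact M) atTop ∧
      (∀ x, R.gradNorm φ x ≤ C) ∧
      (∀ x v, R.hess φ x v ≤ D * R.normSq x v)) := by
  constructor
  · -- Forward direction
    rintro ⟨γ, K, A, B, G, hK, hA, hB, hγC2, hγnn, hG, hGnn, hG0, hG', hint, _hlimsup,
      hγprop, hγgrad, hγhess⟩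
    have hGc : Continuous G := hG.continuous
    have hGdiff : Differentiable ℝ G := hG.differentiable (by simp)
    have hGmono : MonotoneOn G (Ici 0) := by
      apply monotoneOn_of_deriv_nonneg (convex_Ici 0) hGc.continuousOn
        (fun x _ => (hGdiff x).differentiableWithinAt)
      intro x hx
      rw [interior_Ici] at hx
      exact hG' x (le_of_lt hx)
    have hGpos : ∀ s, 0 ≤ s → 0 < G s := fun s hs =>
      lt_of_lt_of_le hG0 (hGmono self_mem_Ici hs hs)
    have hγcont : Continuous γ := R.c2_continuous γ hγC2
    obtain ⟨r, hr⟩ : ∃ r, ∀ x ∈ K, γ x + 1 ≤ r := by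
      rcases K.eq_empty_or_nonempty with h | h
      · exact ⟨0, by simp [h]⟩
      · obtain ⟨z, hz, hmax⟩ := hK.exists_isMaxOn h
          ((hγcont.add continuous_const).continuousOn)
        exact ⟨γ z + 1, fun x hx => hmax hx⟩
    set Rc : ℝ := max 2 r + 2 with hRcdef
    have hRc2 : 2 ≤ Rc := by
      have := le_max_left 2 r; simp only [hRcdef]; linarith
    have hRc0 : (0:ℝ) < Rc := by linarith
    have hKRc : ∀ x ∈ K, γ x + 1 ≤ Rc - 2 := fun x hx => by
      have h1 := hr x hx; have := le_max_right 2 r; simp only [hRcdef]; linarith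
    obtain ⟨C₀, hC₀nn, hC₀⟩ := chidf_bound Rc
    have hsG0 : 0 < Real.sqrt (G 0) := Real.sqrt_pos.2 hG0
    set sG0 : ℝ := Real.sqrt (G 0) with hsG0def
    have hCc : 0 < A * sG0⁻¹ := mul_pos hA (inv_pos.2 hsG0)
    have hDc1 : 0 ≤ C₀ * sG0⁻¹ * A ^ 2 * (Rc + 1) := by
      apply mul_nonneg (mul_nonneg (mul_nonneg hC₀nn (by positivity)) (sq_nonneg A))
      linarith
    have hDc : 0 < C₀ * sG0⁻¹ * A ^ 2 * (Rc + 1) + B := by linarith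
    set γ' : M → ℝ := fun x => γ x + 1 with hγ'def
    have hγ'C2 : R.C2 γ' := R.c2_add_const γ 1 hγC2
    have hγ'1 : ∀ x, 1 ≤ γ' x := fun x => by
      simp only [hγ'def]; linarith [hγnn x]
    have hmem : ∀ x, γ' x ∈ Ioi (1/2 : ℝ) := fun x =>
      mem_Ioi.2 (lt_of_lt_of_le one_half_lt_one (hγ'1 x))
    have hhC2 : ContDiffOn ℝ 2 (hf G Rc) (Ioi (1/2 : ℝ)) := contDiffOn_hf hG hGpos hRc0
    have hnotK : ∀ x, Rc - 2 < γ' x → x ∉ K := fun x hx hxK => by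
      have h1 := hKRc x hxK; simp only [hγ'def] at hx; linarith
    refine ⟨(hf G Rc) ∘ γ', A * sG0⁻¹, C₀ * sG0⁻¹ * A ^ 2 * (Rc + 1) + B, hCc, hDc,
      R.c2_comp γ' (hf G Rc) _ hγ'C2 isOpen_Ioi hmem hhC2, ?_, ?_, ?_⟩
    · -- properness
      have h1 : Tendsto γ' (cocompact M) atTop := by
        rw [hγ'def]; exact tendsto_atTop_add_const_right _ 1 hγprop
      exact (tendsto_hf hGc hGnn hGmono hG0 hint hRc2).comp h1
    · -- gradient bound
      intro x
      rw [R.gradNorm_comp γ' (hf G Rc) _ hγ'C2 isOpen_Ioi hmem hhC2]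
      have hgn_eq : R.gradNorm γ' x = R.gradNorm γ x := by
        rw [hγ'def]; exact R.gradNorm_add_const γ 1 x
      rw [hgn_eq, deriv_hf hGc hGpos hRc0]
      have ht1 : 1 ≤ γ' x := hγ'1 x
      rcases le_or_gt (γ' x) Rc with hcase | hcase
      · rw [rhof_zero hcase]; simpa using hCc.le
      · have hxK : x ∉ K := hnotK x (by linarith)
        rw [abs_of_nonneg (rhof_nonneg _ _ _)]
        have hgn := hγgrad x hxK
        have hgn0 := R.gradNorm_nonneg γ x
        have ht0 : (0:ℝ) < γ' x := by linarith
        have hwf : wf G (γ' x) = Real.sqrt (γ' x) * Real.sqrt (G (Real.sqrt (γ' x))) := by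
          rw [wf, qf, Real.sqrt_mul ht0.le]
        have hst : (0:ℝ) < Real.sqrt (γ' x) := Real.sqrt_pos.2 ht0
        have hsg : sG0 ≤ Real.sqrt (G (Real.sqrt (γ' x))) :=
          Real.sqrt_le_sqrt (hGmono self_mem_Ici (Real.sqrt_nonneg _) (Real.sqrt_nonneg _))
        have hsgpos : 0 < Real.sqrt (G (Real.sqrt (γ' x))) := lt_of_lt_of_le hsG0 hsg
        have hsγ : Real.sqrt (γ x) ≤ Real.sqrt (γ' x) :=
          Real.sqrt_le_sqrt (by simp only [hγ'def]; linarith)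
        calc rhof G Rc (γ' x) * R.gradNorm γ x
            ≤ (wf G (γ' x))⁻¹ * (A * Real.sqrt (γ x)) :=
              mul_le_mul (rhof_le_inv G Rc _) hgn hgn0 (inv_nonneg.2 (Real.sqrt_nonneg _))
          _ ≤ (wf G (γ' x))⁻¹ * (A * Real.sqrt (γ' x)) := by
              apply mul_le_mul_of_nonneg_left _ (inv_nonneg.2 (Real.sqrt_nonneg _))
              exact mul_le_mul_of_nonneg_left hsγ hA.le
          _ = A * (Real.sqrt (G (Real.sqrt (γ' x))))⁻¹ := by
              rw [hwf, mul_inv, show (Real.sqrt (γ' x))⁻¹ * (Real.sqrt (G (Real.sqrt (γ' x))))⁻¹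
                  * (A * Real.sqrt (γ' x))
                = A * (Real.sqrt (G (Real.sqrt (γ' x))))⁻¹ * ((Real.sqrt (γ' x))⁻¹ * Real.sqrt (γ' x))
                from by ring, inv_mul_cancel₀ hst.ne', mul_one]
          _ ≤ A * sG0⁻¹ := by
              apply mul_le_mul_of_nonneg_left _ hA.le
              exact inv_anti₀ hsG0 hsg
    · -- Hessian bound
      intro x v
      rw [R.hess_comp γ' (hf G Rc) _ hγ'C2 isOpen_Ioi hmem hhC2]
      have hhess_eq : R.hess γ' x v = R.hess γ x v := by
        rw [hγ'def]; exact R.hess_add_const γ 1 x v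
      rw [hhess_eq]
      have ht1 : 1 ≤ γ' x := hγ'1 x
      have ht0 : (0:ℝ) < γ' x := by linarith
      rw [deriv_hf hGc hGpos hRc0, (hasDerivAt_rhof (R := Rc) hGdiff hGpos ht0).deriv]
      have hip2nn : 0 ≤ R.gradInner γ' x v ^ 2 := sq_nonneg _
      have hns : 0 ≤ R.normSq x v := R.normSq_nonneg x v
      rcases le_or_gt (γ' x) (Rc - 2) with hcase | hcase
      · simp only [rhodf, rhof, chidf_zero_le (show γ' x ≤ Rc by linarith),
          chif_zero (show γ' x ≤ Rc by linarith), zero_mul, zero_add, add_zero]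
        simpa using mul_nonneg hDc.le hns
      · have hxK : x ∉ K := hnotK x (by linarith)
        have hwfpos : 0 < wf G (γ' x) := wf_pos hGpos ht0
        have hterm2 : rhof G Rc (γ' x) * R.hess γ x v ≤ B * R.normSq x v := by
          have h1 := hγhess x hxK v
          have hγx : γ x = γ' x - 1 := by simp only [hγ'def]; ring
          have hmon : Real.sqrt (γ x * G (Real.sqrt (γ x))) ≤ wf G (γ' x) := by
            apply Real.sqrt_le_sqrt
            have h2 : G (Real.sqrt (γ x)) ≤ G (Real.sqrt (γ' x)) :=
              hGmono (Real.sqrt_nonneg _) (Real.sqrt_nonneg _)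
                (Real.sqrt_le_sqrt (by linarith [hγx]))
            have h3 : 0 ≤ G (Real.sqrt (γ x)) := hGnn _ (Real.sqrt_nonneg _)
            have h4 : γ x ≤ γ' x := by linarith [hγx]
            have h5 : 0 ≤ γ x := hγnn x
            simp only [qf]
            nlinarith
          calc rhof G Rc (γ' x) * R.hess γ x v
              ≤ rhof G Rc (γ' x) * (B * wf G (γ' x) * R.normSq x v) := by
                apply mul_le_mul_of_nonneg_left _ (rhof_nonneg _ _ _)
                calc R.hess γ x v ≤ B * Real.sqrt (γ x * G (Real.sqrt (γ x))) * R.normSq x v := h1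
                  _ ≤ B * wf G (γ' x) * R.normSq x v := by
                      apply mul_le_mul_of_nonneg_right _ hns
                      exact mul_le_mul_of_nonneg_left hmon hB.le
            _ ≤ (wf G (γ' x))⁻¹ * (B * wf G (γ' x) * R.normSq x v) := by
                apply mul_le_mul_of_nonneg_right (rhof_le_inv G Rc _)
                positivity
            _ = B * R.normSq x v := by
                rw [show (wf G (γ' x))⁻¹ * (B * wf G (γ' x) * R.normSq x v)
                    = B * R.normSq x v * ((wf G (γ' x))⁻¹ * wf G (γ' x)) from by ring,
                  inv_mul_cancel₀ hwfpos.ne', mul_one]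
        have hterm1 : rhodf G Rc (γ' x) * R.gradInner γ' x v ^ 2
            ≤ C₀ * sG0⁻¹ * A ^ 2 * (Rc + 1) * R.normSq x v := by
          have hnegpart : chif Rc (γ' x) * (-wdf G (γ' x) / wf G (γ' x) ^ 2) ≤ 0 := by
            apply mul_nonpos_of_nonneg_of_nonpos (chif_nonneg _ _)
            apply div_nonpos_of_nonpos_of_nonneg
            · simp only [neg_nonpos]; exact wdf_nonneg hGnn hG' ht0
            · positivity
          rcases le_or_gt (γ' x) (Rc + 1) with hc2 | hc2
          · have hbound : rhodf G Rc (γ' x) ≤ C₀ * sG0⁻¹ := by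
              have h5 : chidf Rc (γ' x) ≤ C₀ := le_trans (le_abs_self _) (hC₀ _)
              have h6 : (wf G (γ' x))⁻¹ ≤ sG0⁻¹ :=
                inv_anti₀ hsG0 (wf_ge hGnn hGmono ht1)
              have h4 : chidf Rc (γ' x) * (wf G (γ' x))⁻¹ ≤ C₀ * sG0⁻¹ :=
                calc chidf Rc (γ' x) * (wf G (γ' x))⁻¹
                    ≤ C₀ * (wf G (γ' x))⁻¹ :=
                      mul_le_mul_of_nonneg_right h5 (by positivity)
                  _ ≤ C₀ * sG0⁻¹ := mul_le_mul_of_nonneg_left h6 hC₀nn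
              calc rhodf G Rc (γ' x)
                  ≤ chidf Rc (γ' x) * (wf G (γ' x))⁻¹ := by
                    simp only [rhodf]; linarith
                _ ≤ C₀ * sG0⁻¹ := h4
            have hip2le : R.gradInner γ' x v ^ 2 ≤ A ^ 2 * (Rc + 1) * R.normSq x v := by
              have h7 := R.gradInner_sq_le γ' x v
              have h8 : R.gradNorm γ' x = R.gradNorm γ x := by
                rw [hγ'def]; exact R.gradNorm_add_const γ 1 x
              have h9 : R.gradNorm γ x ^ 2 ≤ A ^ 2 * γ x := by
                have h12 : R.gradNorm γ x ^ 2 ≤ (A * Real.sqrt (γ x)) ^ 2 :=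
                  pow_le_pow_left₀ (R.gradNorm_nonneg γ x) (hγgrad x hxK) 2
                have h13 : Real.sqrt (γ x) ^ 2 = γ x := Real.sq_sqrt (hγnn x)
                calc R.gradNorm γ x ^ 2 ≤ (A * Real.sqrt (γ x)) ^ 2 := h12
                  _ = A ^ 2 * γ x := by rw [mul_pow, h13]
              have hγxle : γ x ≤ Rc + 1 := by
                have : γ x = γ' x - 1 := by simp only [hγ'def]; ring
                linarith
              calc R.gradInner γ' x v ^ 2
                  ≤ R.gradNorm γ' x ^ 2 * R.normSq x v := h7
                _ = R.gradNorm γ x ^ 2 * R.normSq x v := by rw [h8]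
                _ ≤ A ^ 2 * (Rc + 1) * R.normSq x v := by
                    apply mul_le_mul_of_nonneg_right _ hns
                    calc R.gradNorm γ x ^ 2 ≤ A ^ 2 * γ x := h9
                      _ ≤ A ^ 2 * (Rc + 1) := by nlinarith [sq_nonneg A]
            calc rhodf G Rc (γ' x) * R.gradInner γ' x v ^ 2
                ≤ (C₀ * sG0⁻¹) * R.gradInner γ' x v ^ 2 :=
                  mul_le_mul_of_nonneg_right hbound hip2nn
              _ ≤ (C₀ * sG0⁻¹) * (A ^ 2 * (Rc + 1) * R.normSq x v) :=
                  mul_le_mul_of_nonneg_left hip2le (mul_nonneg hC₀nn (by positivity))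
              _ = C₀ * sG0⁻¹ * A ^ 2 * (Rc + 1) * R.normSq x v := by ring
          · have hzero : chidf Rc (γ' x) = 0 := chidf_zero_ge hc2.le
            have hle0 : rhodf G Rc (γ' x) ≤ 0 := by
              simp only [rhodf, hzero, zero_mul, zero_add]
              exact hnegpart
            have hb1 : rhodf G Rc (γ' x) * R.gradInner γ' x v ^ 2 ≤ 0 :=
              mul_nonpos_of_nonpos_of_nonneg hle0 hip2nn
            have hb2 : 0 ≤ C₀ * sG0⁻¹ * A ^ 2 * (Rc + 1) * R.normSq x v :=
              mul_nonneg hDc1 hns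
            linarith
        calc rhodf G Rc (γ' x) * R.gradInner γ' x v ^ 2 + rhof G Rc (γ' x) * R.hess γ x v
            ≤ C₀ * sG0⁻¹ * A ^ 2 * (Rc + 1) * R.normSq x v + B * R.normSq x v :=
              add_le_add hterm1 hterm2
          _ = (C₀ * sG0⁻¹ * A ^ 2 * (Rc + 1) + B) * R.normSq x v := by ring
  · -- Backward direction
    rintro ⟨φ, C, D, hC, hD, hφC2, hφprop, hφgrad, hφhess⟩
    have hφcont : Continuous φ := R.c2_continuous φ hφC2
    obtain ⟨K₀, hK₀c, hK₀⟩ : ∃ K₀ : Set M, IsCompact K₀ ∧ ∀ x ∉ K₀, (0:ℝ) ≤ φ x := by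
      have hev : ∀ᶠ x in cocompact M, (0:ℝ) ≤ φ x := hφprop.eventually (eventually_ge_atTop 0)
      rcases mem_cocompact.1 hev with ⟨K₀, hc, hsub⟩
      exact ⟨K₀, hc, fun x hx => hsub hx⟩
    obtain ⟨m, hm⟩ : ∃ m, ∀ x, m ≤ φ x := by
      rcases K₀.eq_empty_or_nonempty with h | h
      · exact ⟨0, fun x => hK₀ x (by simp [h])⟩
      · obtain ⟨z, hz, hmin⟩ := hK₀c.exists_isMinOn h hφcont.continuousOn
        refine ⟨min (φ z) 0, fun x => ?_⟩
        by_cases hx : x ∈ K₀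
        · exact le_trans (min_le_left _ _) (hmin hx)
        · exact le_trans (min_le_right _ _) (hK₀ x hx)
    refine ⟨fun x => φ x + (1 - m), ∅, C, D, fun t => (1 + t) ^ 2,
      isCompact_empty, hC, hD, R.c2_add_const φ (1 - m) hφC2,
      fun x => by show (0:ℝ) ≤ φ x + (1 - m); linarith [hm x],
      (contDiff_const.add contDiff_id).pow 2,
      fun t _ => sq_nonneg _, by norm_num, ?_, ?_, ?_,
      tendsto_atTop_add_const_right _ (1 - m) hφprop, ?_, ?_⟩
    · -- deriv nonneg
      intro t ht
      have hd : HasDerivAt (fun t : ℝ => (1 + t) ^ 2) (2 * (1 + t)) t := by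
        have := ((hasDerivAt_id t).const_add (1:ℝ)).pow 2
        simp at this; exact this
      rw [hd.deriv]; linarith
    · -- lintegral diverges
      have hcongr : ∀ t ∈ Ioi (0:ℝ),
          ENNReal.ofReal (1 / Real.sqrt ((1 + t) ^ 2)) = ENNReal.ofReal (1 / (1 + t)) := by
        intro t ht
        rw [Real.sqrt_sq (by linarith [mem_Ioi.1 ht])]
      rw [setLIntegral_congr_fun measurableSet_Ioi hcongr]
      by_contra htop
      have hmeas : Measurable fun t : ℝ => 1 / (1 + t) :=
        measurable_const.div (measurable_const.add measurable_id)
      have hnn : 0 ≤ᵐ[volume.restrict (Ioi (0:ℝ))] fun t : ℝ => 1 / (1 + t) :=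
        (ae_restrict_iff' measurableSet_Ioi).2 (ae_of_all _ fun t ht => by
          have := mem_Ioi.1 ht; positivity)
      have hIO : IntegrableOn (fun t : ℝ => 1 / (1 + t)) (Ioi 0) := by
        refine ⟨hmeas.aestronglyMeasurable, ?_⟩
        rw [hasFiniteIntegral_iff_ofReal hnn]
        exact Ne.lt_top htop
      have h1 : IntegrableOn (fun x : ℝ => x ^ (-1 : ℝ)) (Ioi 1) := by
        have hIO2 : IntegrableOn (fun t : ℝ => 2 * (1 / (1 + t))) (Ioi 1) :=
          (hIO.mono_set (Ioi_subset_Ioi (by norm_num))).const_mul 2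
        refine Integrable.mono' hIO2 ?_ ?_
        · apply ContinuousOn.aestronglyMeasurable _ measurableSet_Ioi
          intro x hx
          have hx0 : (0:ℝ) < x := lt_trans zero_lt_one (mem_Ioi.1 hx)
          exact (Real.continuousAt_rpow_const x (-1) (Or.inl hx0.ne')).continuousWithinAt
        · rw [ae_restrict_iff' measurableSet_Ioi]
          apply ae_of_all; intro x hx
          have hx1 : (1:ℝ) < x := mem_Ioi.1 hx
          rw [Real.norm_eq_abs, Real.rpow_neg_one, abs_of_pos (by positivity)]
          rw [inv_eq_one_div, div_le_iff₀ (by linarith)]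
          have : 2 * (1 / (1 + x)) = 2 / (1 + x) := by ring
          rw [this, div_mul_eq_mul_div, le_div_iff₀ (by linarith)]
          nlinarith
      rw [integrableOn_Ioi_rpow_iff zero_lt_one] at h1
      norm_num at h1
    · -- limsup
      have hev : ∀ᶠ t : ℝ in atTop,
          ((t * (1 + Real.sqrt t) ^ 2 / (1 + t) ^ 2 : ℝ) : EReal) ≤ ((4:ℝ) : EReal) := by
        filter_upwards [eventually_ge_atTop (1:ℝ)] with t ht
        rw [EReal.coe_le_coe_iff]
        have hst : 1 ≤ Real.sqrt t := Real.one_le_sqrt.2 ht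
        have hsq : Real.sqrt t ^ 2 = t := Real.sq_sqrt (by linarith)
        rw [div_le_iff₀ (by positivity)]
        have h3 : 0 ≤ Real.sqrt t ^ 3 * (Real.sqrt t - 1) :=
          mul_nonneg (pow_nonneg (Real.sqrt_nonneg t) 3) (by linarith)
        nlinarith [h3, pow_nonneg (Real.sqrt_nonneg t) 3, sq_nonneg (Real.sqrt t)]
      exact lt_of_le_of_lt (Filter.limsup_le_of_le (by isBoundedDefault) hev)
        (EReal.coe_lt_top 4)
    · -- gradient
      intro x _
      rw [R.gradNorm_add_const φ (1 - m) x]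
      calc R.gradNorm φ x ≤ C := hφgrad x
        _ ≤ C * Real.sqrt (φ x + (1 - m)) := by
            apply le_mul_of_one_le_right hC.le
            rw [Real.one_le_sqrt]
            linarith [hm x]
    · -- hessian
      intro x _ v
      rw [R.hess_add_const φ (1 - m) x v]
      have h2 : 1 ≤ φ x + (1 - m) := by linarith [hm x]
      have h4 : (1:ℝ) ≤ (1 + Real.sqrt (φ x + (1 - m))) ^ 2 := by
        nlinarith [Real.sqrt_nonneg (φ x + (1 - m))]
      have h1 : (1:ℝ) ≤ Real.sqrt ((φ x + (1 - m)) *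
          (1 + Real.sqrt (φ x + (1 - m))) ^ 2) := by
        rw [Real.one_le_sqrt]
        calc (1:ℝ) = 1 * 1 := (one_mul 1).symm
          _ ≤ (φ x + (1 - m)) * (1 + Real.sqrt (φ x + (1 - m))) ^ 2 :=
              mul_le_mul h2 h4 zero_le_one (by linarith)
      calc R.hess φ x v ≤ D * R.normSq x v := hφhess x v
        _ ≤ D * Real.sqrt ((φ x + (1 - m)) * (1 + Real.sqrt (φ x + (1 - m))) ^ 2)
              * R.normSq x v := by
            apply mul_le_mul_of_nonneg_right _ (R.normSq_nonneg x v)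
            exact le_mul_of_one_le_right hD.le h1
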